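/- (Adaptive flexibility function, Theorem 1) Let a ∈ ℝ, b < 0, λ < 0, C > 0, d̄ ∈ ℝ, and adaptation gains γ_α, γ_β, γ_ζ > 0. Let Proj_α, Proj_β, Proj_ζ be projection operators with respective bounds [α_min, α_max], [β_min, β_max], [ζ_min, ζ_max] and tolerances ε_α, ε_β, ε_ζ, and suppose the ideal parameters α* = (λ − a)/b, β* = 1/(b·C), ζ* = −d̄ satisfy α* ∈ [α_min + ε_α, α_max − ε_α], β* ∈ [β_min + ε_β, β_max − ε_β], ζ* ∈ [ζ_min + ε_ζ, ζ_max − ε_ζ]. Let r : ℝ → ℝ be continuous and bounded, and let X, Y, α̂, β̂, ζ̂ : ℝ → ℝ be differentiable and satisfy for all t ≥ 0: X'(t) = a·X(t) + b·(u(t) + d̄) with price signal u(t) = α̂(t)·X(t) + β̂(t)·r(t) + ζ̂(t); Y'(t) = λ·Y(t) + r(t)/C; α̂'(t) = γ_α·Proj_α(α̂(t), −sgn(b)·X(t)·e(t)); β̂'(t) = γ_β·Proj_β(β̂(t), −sgn(b)·r(t)·e(t)); ζ̂'(t) = γ_ζ·Proj_ζ(ζ̂(t), −sgn(b)·e(t)),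 where e(t) = X(t) − Y(t). Assume the initial adaptive parameters satisfy h_α(α̂(0)) ≤ 1, h_β(β̂(0)) ≤ 1, h_ζ(ζ̂(0)) ≤ 1. Then: (i) the parameter errors α̂ − α*, β̂ − β*, ζ̂ − ζ* and the tracking error e are uniformly bounded on [0, ∞); (ii) α̂(t) ∈ [α_min, α_max], β̂(t) ∈ [β_min, β_max], ζ̂(t) ∈ [ζ_min, ζ_max] for all t ≥ 0, so the price signal u is bounded; and (iii) e(t) → 0 as t → ∞. -/

import Mathlib

set_option maxHeartbeats 1000000


open Filter

/-- The convex function `h(θ) = ((θ − θmin − ε)(θ − θmax + ε)) / ((θmax − θmin − ε)·ε)`. -/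
noncomputable def hFun (θmin θmax ε θ : ℝ) : ℝ :=
  ((θ - θmin - ε) * (θ - θmax + ε)) / ((θmax - θmin - ε) * ε)

/-- The projection operator `Proj(θ, Y)`. -/
noncomputable def projOp (θmin θmax ε θ Y : ℝ) : ℝ :=
  if 0 < hFun θmin θmax ε θ ∧ 0 < Y * deriv (hFun θmin θmax ε) θ then
    Y - Y * hFun θmin θmax ε θ
  else Y

section Aux
open Set

lemma hFun_hasDerivAt (θmin θmax ε θ : ℝ) :
    HasDerivAt (hFun θmin θmax ε) ((2*θ - θmin - θmax) / ((θmax - θmin - ε) * ε)) θ := by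
  have h1 : HasDerivAt (fun x : ℝ => (x - θmin - ε) * (x - θmax + ε))
      (1 * (θ - θmax + ε) + (θ - θmin - ε) * 1) θ := by
    exact (((hasDerivAt_id θ).sub_const θmin).sub_const ε).mul
      (((hasDerivAt_id θ).sub_const θmax).add_const ε)
  have h2 := h1.div_const ((θmax - θmin - ε) * ε)
  refine h2.congr_deriv ?_
  ring

lemma hFun_deriv (θmin θmax ε θ : ℝ) :
    deriv (hFun θmin θmax ε) θ = (2*θ - θmin - θmax) / ((θmax - θmin - ε) * ε) :=
  (hFun_hasDerivAt θmin θmax ε θ).deriv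

lemma abs_le_sqrt_of_sq_le {x c : ℝ} (h : x^2 ≤ c) : |x| ≤ Real.sqrt c := by
  rw [← Real.sqrt_sq_eq_abs]; exact Real.sqrt_le_sqrt h

/-- Barrier lemma: if `g' ≤ 0` whenever `g ≥ c`, then `g t ≤ max (g 0) c` for `t ≥ 0`. -/
lemma barrier {g g' : ℝ → ℝ} (hc : ContinuousOn g (Set.Ici 0))
    (hg : ∀ t > (0:ℝ), HasDerivAt g (g' t) t)
    (c : ℝ) (hd : ∀ t > (0:ℝ), c ≤ g t → g' t ≤ 0) :
    ∀ t ≥ (0:ℝ), g t ≤ max (g 0) c := by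
  intro t ht
  by_contra hgt
  push_neg at hgt
  set m := max (g 0) c with hm
  have hcont : ContinuousOn g (Icc 0 t) := hc.mono (Icc_subset_Ici_self)
  have ht0 : 0 < t := by
    rcases eq_or_lt_of_le ht with h | h
    · exfalso; rw [← h] at hgt; exact absurd (le_max_left _ _) (not_le.mpr hgt)
    · exact h
  set A : Set ℝ := Icc 0 t ∩ g ⁻¹' (Iic m) with hA
  have hclosed : IsClosed A := hcont.preimage_isClosed_of_isClosed isClosed_Icc isClosed_Iic
  have hcompact : IsCompact A := isCompact_Icc.of_isClosed_subset hclosed inter_subset_left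
  have hne : A.Nonempty := ⟨0, ⟨le_refl 0, ht0.le⟩, mem_preimage.mpr (mem_Iic.mpr (le_max_left _ _))⟩
  set s := sSup A with hs
  have hsA : s ∈ A := hcompact.sSup_mem hne
  obtain ⟨⟨hs0, hst⟩, hgs⟩ := hsA
  have hslt : s < t := by
    rcases eq_or_lt_of_le hst with h | h
    · exfalso; rw [h] at hgs; exact absurd hgs (not_le.mpr hgt)
    · exact h
  have hnotA : ∀ x, s < x → x ≤ t → m < g x := by
    intro x hx1 hx2
    by_contra hgx
    push_neg at hgx
    have : x ∈ A := ⟨⟨le_trans hs0 hx1.le, hx2⟩, hgx⟩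
    exact absurd (le_csSup hcompact.bddAbove this) (not_le.mpr hx1)
  have hanti : AntitoneOn g (Icc s t) := by
    apply antitoneOn_of_deriv_nonpos (convex_Icc s t)
      (hcont.mono (Icc_subset_Icc hs0 le_rfl))
    · intro x hx
      rw [interior_Icc] at hx
      exact ((hg x (lt_of_le_of_lt hs0 hx.1)).differentiableAt).differentiableWithinAt
    · intro x hx
      rw [interior_Icc] at hx
      have hx0 : 0 < x := lt_of_le_of_lt hs0 hx.1
      rw [(hg x hx0).deriv]
      exact hd x hx0 (le_trans (le_max_right _ _) (hnotA x hx.1 hx.2.le).le)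
  have := hanti ⟨le_rfl, hslt.le⟩ ⟨hslt.le, le_rfl⟩ hslt.le
  exact absurd (le_trans this hgs) (not_le.mpr hgt)

/-- Projection property: the parameter error times the projection defect is nonpositive. -/
lemma proj_key (θmin θmax ε θs θ Yv : ℝ) (hε : 0 < ε) (hlt : ε < (θmax - θmin)/2)
    (hθs : θs ∈ Set.Icc (θmin + ε) (θmax - ε)) :
    (θ - θs) * (projOp θmin θmax ε θ Yv - Yv) ≤ 0 := by
  obtain ⟨hθs1, hθs2⟩ := hθs
  have hK : 0 < (θmax - θmin - ε) * ε := by nlinarith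
  unfold projOp
  split_ifs with hcase
  · obtain ⟨hh, hY⟩ := hcase
    have hP : 0 < (θ - θmin - ε) * (θ - θmax + ε) := by
      have := (div_pos_iff).mp hh
      rcases this with ⟨h1, _⟩ | ⟨_, h2⟩
      · exact h1
      · linarith
    rw [hFun_deriv] at hY
    have hQ : 0 < Yv * (2*θ - θmin - θmax) := by
      have := (div_pos_iff).mp (by
        have : 0 < Yv * ((2*θ - θmin - θmax) / ((θmax - θmin - ε) * ε)) := hY
        rw [mul_div_assoc'] at this; exact this)
      rcases this with ⟨h1, _⟩ | ⟨_, h2⟩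
      · exact h1
      · linarith
    rcases mul_pos_iff.mp hP with ⟨ha, hb2⟩ | ⟨ha, hb2⟩
    · -- θ > θmax - ε ≥ θs
      have hθgt : θs < θ := by linarith
      have h2θ : 0 < 2*θ - θmin - θmax := by linarith
      have hYv : 0 < Yv := by
        by_contra h; push_neg at h
        nlinarith
      have hhpos : 0 < hFun θmin θmax ε θ := hh
      nlinarith [mul_pos (mul_pos (by linarith : (0:ℝ) < θ - θs) hYv) hhpos]
    · -- θ < θmin + ε ≤ θs
      have hθlt : θ < θs := by linarith
      have h2θ : 2*θ - θmin - θmax < 0 := by linarith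
      have hYv : Yv < 0 := by
        by_contra h; push_neg at h
        nlinarith
      have hhpos : 0 < hFun θmin θmax ε θ := hh
      nlinarith [mul_pos (mul_pos (by linarith : (0:ℝ) < θs - θ) (by linarith : (0:ℝ) < -Yv)) hhpos]
  · simp

/-- Membership from `hFun ≤ 1`. -/
lemma mem_of_hFun_le_one (θmin θmax ε θ : ℝ) (hε : 0 < ε) (hlt : ε < (θmax - θmin)/2)
    (h1 : hFun θmin θmax ε θ ≤ 1) : θ ∈ Set.Icc θmin θmax := by
  have hK : 0 < (θmax - θmin - ε) * ε := by nlinarith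
  have h2 : (θ - θmin - ε) * (θ - θmax + ε) ≤ (θmax - θmin - ε) * ε :=
    (div_le_one hK).mp h1
  have h3 : (θ - θmin) * (θ - θmax) ≤ 0 := by nlinarith
  constructor
  · by_contra h; push_neg at h; nlinarith
  · by_contra h; push_neg at h; nlinarith

/-- The invariance step: when `hFun ≥ 1`, the derivative of `hFun` along the flow is `≤ 0`. -/
lemma proj_invariance_step (θmin θmax ε θ Yv γ : ℝ) (hγ : 0 < γ)
    (h1 : 1 ≤ hFun θmin θmax ε θ) :
    (deriv (hFun θmin θmax ε) θ) * (γ * projOp θmin θmax ε θ Yv) ≤ 0 := by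
  unfold projOp
  split_ifs with hcase
  · obtain ⟨hh, hY⟩ := hcase
    nlinarith [mul_nonneg (mul_pos hγ hY).le (by linarith : (0:ℝ) ≤ hFun θmin θmax ε θ - 1)]
  · rw [not_and] at hcase
    have hY : Yv * deriv (hFun θmin θmax ε) θ ≤ 0 := by
      by_contra h; push_neg at h
      exact absurd h (hcase (by linarith))
    nlinarith

end Aux

open Set in
/-- Adaptive flexibility function (Theorem 1): with the projection-based adaptive laws,
(i) the parameter errors and the tracking error `e = X − Y` are uniformly bounded on
`[0, ∞)`; (ii) the adaptive parameters stay in their prescribed intervals, so the price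
signal `u` is bounded; and (iii) `e(t) → 0` as `t → ∞`. -/
theorem adaptive_flexibility_function
    (a b lam C dbar γα γβ γζ : ℝ) (hb : b < 0) (hlam : lam < 0) (hC : 0 < C)
    (hγα : 0 < γα) (hγβ : 0 < γβ) (hγζ : 0 < γζ)
    (αmin αmax εα : ℝ) (hαlt : αmin < αmax) (hεα0 : 0 < εα) (hεα : εα < (αmax - αmin) / 2)
    (βmin βmax εβ : ℝ) (hβlt : βmin < βmax) (hεβ0 : 0 < εβ) (hεβ : εβ < (βmax - βmin) / 2)
    (ζmin ζmax εζ : ℝ) (hζlt : ζmin < ζmax) (hεζ0 : 0 < εζ) (hεζ : εζ < (ζmax - ζmin) / 2)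
    (hαstar : (lam - a) / b ∈ Set.Icc (αmin + εα) (αmax - εα))
    (hβstar : 1 / (b * C) ∈ Set.Icc (βmin + εβ) (βmax - εβ))
    (hζstar : -dbar ∈ Set.Icc (ζmin + εζ) (ζmax - εζ))
    (r : ℝ → ℝ) (hrcont : Continuous r) (hrbnd : ∃ Mr : ℝ, ∀ t ≥ (0:ℝ), |r t| ≤ Mr)
    (X Y αh βh ζh u e : ℝ → ℝ)
    (hu : ∀ t, u t = αh t * X t + βh t * r t + ζh t)
    (he : ∀ t, e t = X t - Y t)
    (hXdot : ∀ t ≥ (0:ℝ), HasDerivAt X (a * X t + b * (u t + dbar)) t)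
    (hYdot : ∀ t ≥ (0:ℝ), HasDerivAt Y (lam * Y t + r t / C) t)
    (hαdot : ∀ t ≥ (0:ℝ), HasDerivAt αh
      (γα * projOp αmin αmax εα (αh t) (-Real.sign b * (X t * e t))) t)
    (hβdot : ∀ t ≥ (0:ℝ), HasDerivAt βh
      (γβ * projOp βmin βmax εβ (βh t) (-Real.sign b * (r t * e t))) t)
    (hζdot : ∀ t ≥ (0:ℝ), HasDerivAt ζh
      (γζ * projOp ζmin ζmax εζ (ζh t) (-Real.sign b * e t)) t)
    (hα0 : hFun αmin αmax εα (αh 0) ≤ 1)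
    (hβ0 : hFun βmin βmax εβ (βh 0) ≤ 1)
    (hζ0 : hFun ζmin ζmax εζ (ζh 0) ≤ 1) :
    (∃ M : ℝ, ∀ t ≥ (0:ℝ),
      |αh t - (lam - a) / b| ≤ M ∧ |βh t - 1 / (b * C)| ≤ M ∧
      |ζh t - (-dbar)| ≤ M ∧ |e t| ≤ M) ∧
    ((∀ t ≥ (0:ℝ), αh t ∈ Set.Icc αmin αmax ∧ βh t ∈ Set.Icc βmin βmax ∧
        ζh t ∈ Set.Icc ζmin ζmax) ∧
      ∃ Mu : ℝ, ∀ t ≥ (0:ℝ), |u t| ≤ Mu) ∧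
    Tendsto e atTop (nhds 0) := by
  obtain ⟨Mr, hMr⟩ := hrbnd
  have hMr0 : 0 ≤ Mr := le_trans (abs_nonneg _) (hMr 0 le_rfl)
  have hbp : (0:ℝ) < -b := neg_pos.mpr hb
  have hbne : b ≠ 0 := ne_of_lt hb
  have hlp : (0:ℝ) < -lam := neg_pos.mpr hlam
  have hsgn : Real.sign b = -1 := Real.sign_of_neg hb
  obtain ⟨αs, hαs⟩ : ∃ x : ℝ, x = (lam - a) / b := ⟨_, rfl⟩
  obtain ⟨βs, hβs⟩ : ∃ x : ℝ, x = 1 / (b * C) := ⟨_, rfl⟩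
  obtain ⟨ζs, hζs⟩ : ∃ x : ℝ, x = -dbar := ⟨_, rfl⟩
  rw [← hαs] at hαstar
  rw [← hβs] at hβstar
  rw [← hζs] at hζstar
  -- simplified adaptation laws
  have hαdot' : ∀ t ≥ (0:ℝ), HasDerivAt αh
      (γα * projOp αmin αmax εα (αh t) (X t * e t)) t := fun t ht => by
    simpa [hsgn] using hαdot t ht
  have hβdot' : ∀ t ≥ (0:ℝ), HasDerivAt βh
      (γβ * projOp βmin βmax εβ (βh t) (r t * e t)) t := fun t ht => by
    simpa [hsgn] using hβdot t ht
  have hζdot' : ∀ t ≥ (0:ℝ), HasDerivAt ζh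
      (γζ * projOp ζmin ζmax εζ (ζh t) (e t)) t := fun t ht => by
    simpa [hsgn] using hζdot t ht
  -- error dynamics
  obtain ⟨ed, hed⟩ : ∃ f : ℝ → ℝ, f = fun t =>
    lam * e t + b * ((αh t - αs) * X t + (βh t - βs) * r t + (ζh t - ζs)) := ⟨_, rfl⟩
  have heD : ∀ t ≥ (0:ℝ), HasDerivAt e (ed t) t := by
    intro t ht
    have heq : e = fun s => X s - Y s := funext he
    have hE : HasDerivAt e (a * X t + b * (u t + dbar) - (lam * Y t + r t / C)) t := by
      rw [heq]; exact (hXdot t ht).sub (hYdot t ht)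
    convert hE using 1
    simp only [hed, hu, he, hαs, hβs, hζs]
    field_simp
    ring
  -- Part (ii): parameter intervals via invariance
  have inv : ∀ (θmin θmax ε γ : ℝ) (θh Yv : ℝ → ℝ), 0 < ε → ε < (θmax - θmin)/2 → 0 < γ →
      (∀ t ≥ (0:ℝ), HasDerivAt θh (γ * projOp θmin θmax ε (θh t) (Yv t)) t) →
      hFun θmin θmax ε (θh 0) ≤ 1 → ∀ t ≥ (0:ℝ), θh t ∈ Set.Icc θmin θmax := by
    intro θmin θmax ε γ θh Yv hε hεlt hγ hder h0 t ht
    set g : ℝ → ℝ := fun s => hFun θmin θmax ε (θh s) with hg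
    set g' : ℝ → ℝ := fun s =>
      deriv (hFun θmin θmax ε) (θh s) * (γ * projOp θmin θmax ε (θh s) (Yv s)) with hg'
    have hder' : ∀ s ≥ (0:ℝ), HasDerivAt g (g' s) s := by
      intro s hs
      exact (((hFun_hasDerivAt θmin θmax ε (θh s)).differentiableAt).hasDerivAt).comp s (hder s hs)
    have hcont : ContinuousOn g (Set.Ici 0) := fun s hs =>
      ((hder' s hs).continuousAt).continuousWithinAt
    have hbar := barrier hcont (fun s hs => hder' s (le_of_lt hs)) 1
      (fun s hs h1 => proj_invariance_step θmin θmax ε (θh s) (Yv s) γ hγ h1) t ht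
    have hle1 : g t ≤ 1 := le_trans hbar (max_le h0 le_rfl)
    exact mem_of_hFun_le_one θmin θmax ε (θh t) hε hεlt hle1
  have hαmem := inv αmin αmax εα γα αh (fun t => X t * e t) hεα0 hεα hγα hαdot' hα0
  have hβmem := inv βmin βmax εβ γβ βh (fun t => r t * e t) hεβ0 hεβ hγβ hβdot' hβ0
  have hζmem := inv ζmin ζmax εζ γζ ζh e hεζ0 hεζ hγζ hζdot' hζ0
  -- Lyapunov function
  obtain ⟨V, hV⟩ : ∃ f : ℝ → ℝ, f = fun t => (e t)^2/2 + (-b)/(2*γα)*(αh t - αs)^2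
      + (-b)/(2*γβ)*(βh t - βs)^2 + (-b)/(2*γζ)*(ζh t - ζs)^2 := ⟨_, rfl⟩
  obtain ⟨Vd, hVd⟩ : ∃ f : ℝ → ℝ, f = fun t => e t * ed t
      + (-b)*((αh t - αs) * projOp αmin αmax εα (αh t) (X t * e t))
      + (-b)*((βh t - βs) * projOp βmin βmax εβ (βh t) (r t * e t))
      + (-b)*((ζh t - ζs) * projOp ζmin ζmax εζ (ζh t) (e t)) := ⟨_, rfl⟩
  have hVD : ∀ t ≥ (0:ℝ), HasDerivAt V (Vd t) t := by
    intro t ht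
    have h1 := ((heD t ht).pow 2).div_const 2
    have h2 := (((hαdot' t ht).sub_const αs).pow 2).const_mul ((-b)/(2*γα))
    have h3 := (((hβdot' t ht).sub_const βs).pow 2).const_mul ((-b)/(2*γβ))
    have h4 := (((hζdot' t ht).sub_const ζs).pow 2).const_mul ((-b)/(2*γζ))
    have h5 := ((h1.add h2).add h3).add h4
    rw [hV]
    refine h5.congr_deriv ?_
    simp only [hVd, hed]
    field_simp
    ring
  have hVle : ∀ t ≥ (0:ℝ), Vd t ≤ lam * (e t)^2 := by
    intro t ht
    have k1 := proj_key αmin αmax εα αs (αh t) (X t * e t) hεα0 hεα hαstar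
    have k2 := proj_key βmin βmax εβ βs (βh t) (r t * e t) hεβ0 hεβ hβstar
    have k3 := proj_key ζmin ζmax εζ ζs (ζh t) (e t) hεζ0 hεζ hζstar
    have hexp : Vd t - lam * (e t)^2 =
        (-b) * ((αh t - αs) * (projOp αmin αmax εα (αh t) (X t * e t) - X t * e t)
          + (βh t - βs) * (projOp βmin βmax εβ (βh t) (r t * e t) - r t * e t)
          + (ζh t - ζs) * (projOp ζmin ζmax εζ (ζh t) (e t) - e t)) := by
      simp only [hVd, hed]; ring
    nlinarith [hexp, k1, k2, k3, hbp]
  have hVnn : ∀ t, 0 ≤ V t := by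
    intro t
    simp only [hV]
    have n1 : 0 ≤ (e t)^2/2 := by positivity
    have n2 : 0 ≤ (-b)/(2*γα)*(αh t - αs)^2 :=
      mul_nonneg (div_nonneg hbp.le (by linarith)) (sq_nonneg _)
    have n3 : 0 ≤ (-b)/(2*γβ)*(βh t - βs)^2 :=
      mul_nonneg (div_nonneg hbp.le (by linarith)) (sq_nonneg _)
    have n4 : 0 ≤ (-b)/(2*γζ)*(ζh t - ζs)^2 :=
      mul_nonneg (div_nonneg hbp.le (by linarith)) (sq_nonneg _)
    linarith
  have hVcont : ContinuousOn V (Set.Ici 0) := fun s hs =>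
    ((hVD s hs).continuousAt).continuousWithinAt
  have hVmono : ∀ t ≥ (0:ℝ), V t ≤ V 0 := by
    intro t ht
    have := barrier hVcont (fun s hs => hVD s hs.le) (V 0)
      (fun s hs _ => le_trans (hVle s hs.le)
        (mul_nonpos_of_nonpos_of_nonneg hlam.le (sq_nonneg _))) t ht
    simpa using this
  -- Part (i): uniform bounds
  obtain ⟨M, hM⟩ : ∃ x : ℝ, x = Real.sqrt (2*V 0) + Real.sqrt (2*γα*V 0/(-b))
      + Real.sqrt (2*γβ*V 0/(-b)) + Real.sqrt (2*γζ*V 0/(-b)) := ⟨_, rfl⟩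
  have hsq : ∀ t ≥ (0:ℝ), (e t)^2 ≤ 2*V 0 ∧ (αh t - αs)^2 ≤ 2*γα*V 0/(-b)
      ∧ (βh t - βs)^2 ≤ 2*γβ*V 0/(-b) ∧ (ζh t - ζs)^2 ≤ 2*γζ*V 0/(-b) := by
    intro t ht
    have hVt : (e t)^2/2 + (-b)/(2*γα)*(αh t - αs)^2
        + (-b)/(2*γβ)*(βh t - βs)^2 + (-b)/(2*γζ)*(ζh t - ζs)^2 ≤ V 0 := by
      have h0 := hVmono t ht
      nth_rewrite 1 [hV] at h0
      simpa using h0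
    have n2 : 0 ≤ (-b)/(2*γα)*(αh t - αs)^2 :=
      mul_nonneg (div_nonneg hbp.le (by linarith)) (sq_nonneg _)
    have n3 : 0 ≤ (-b)/(2*γβ)*(βh t - βs)^2 :=
      mul_nonneg (div_nonneg hbp.le (by linarith)) (sq_nonneg _)
    have n4 : 0 ≤ (-b)/(2*γζ)*(ζh t - ζs)^2 :=
      mul_nonneg (div_nonneg hbp.le (by linarith)) (sq_nonneg _)
    have n1 : 0 ≤ (e t)^2/2 := by positivity
    refine ⟨by linarith, ?_, ?_, ?_⟩
    · rw [le_div_iff₀ hbp]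
      have h3 : (-b)/(2*γα)*(αh t - αs)^2 ≤ V 0 := by linarith
      have h4 := mul_le_mul_of_nonneg_left h3 (by positivity : (0:ℝ) ≤ 2*γα)
      rw [show 2*γα * ((-b)/(2*γα)*(αh t - αs)^2) = (-b)*(αh t - αs)^2 from by
        field_simp] at h4
      linarith
    · rw [le_div_iff₀ hbp]
      have h3 : (-b)/(2*γβ)*(βh t - βs)^2 ≤ V 0 := by linarith
      have h4 := mul_le_mul_of_nonneg_left h3 (by positivity : (0:ℝ) ≤ 2*γβ)
      rw [show 2*γβ * ((-b)/(2*γβ)*(βh t - βs)^2) = (-b)*(βh t - βs)^2 from by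
        field_simp] at h4
      linarith
    · rw [le_div_iff₀ hbp]
      have h3 : (-b)/(2*γζ)*(ζh t - ζs)^2 ≤ V 0 := by linarith
      have h4 := mul_le_mul_of_nonneg_left h3 (by positivity : (0:ℝ) ≤ 2*γζ)
      rw [show 2*γζ * ((-b)/(2*γζ)*(ζh t - ζs)^2) = (-b)*(ζh t - ζs)^2 from by
        field_simp] at h4
      linarith
  have s1 : (0:ℝ) ≤ Real.sqrt (2*V 0) := Real.sqrt_nonneg _
  have s2 : (0:ℝ) ≤ Real.sqrt (2*γα*V 0/(-b)) := Real.sqrt_nonneg _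
  have s3 : (0:ℝ) ≤ Real.sqrt (2*γβ*V 0/(-b)) := Real.sqrt_nonneg _
  have s4 : (0:ℝ) ≤ Real.sqrt (2*γζ*V 0/(-b)) := Real.sqrt_nonneg _
  have hMbnd : ∀ t ≥ (0:ℝ), |αh t - αs| ≤ M ∧ |βh t - βs| ≤ M ∧ |ζh t - ζs| ≤ M ∧ |e t| ≤ M := by
    intro t ht
    obtain ⟨q1, q2, q3, q4⟩ := hsq t ht
    refine ⟨?_, ?_, ?_, ?_⟩
    · have := abs_le_sqrt_of_sq_le q2; rw [hM]; linarith
    · have := abs_le_sqrt_of_sq_le q3; rw [hM]; linarith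
    · have := abs_le_sqrt_of_sq_le q4; rw [hM]; linarith
    · have := abs_le_sqrt_of_sq_le q1; rw [hM]; linarith
  have hM0 : 0 ≤ M := by rw [hM]; linarith
  -- bound on Y
  obtain ⟨K, hK⟩ : ∃ x : ℝ, x = Mr/((-lam)*C) := ⟨_, rfl⟩
  have hK0 : 0 ≤ K := by rw [hK]; positivity
  have hKdef : (-lam)*C*K = Mr := by
    rw [hK]
    field_simp [hlam.ne, hC.ne']
  have hYbd : ∀ t ≥ (0:ℝ), (Y t)^2 ≤ max ((Y 0)^2) (K^2) := by
    have hb1 : ContinuousOn (fun s => (Y s)^2) (Set.Ici 0) :=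
      fun s hs => (((hYdot s hs).continuousAt).pow 2).continuousWithinAt
    have hb2 : ∀ s > (0:ℝ), HasDerivAt (fun s => (Y s)^2)
        ((fun s => 2*Y s*(lam*Y s + r s/C)) s) s := by
      intro s hs
      have h1 := (hYdot s hs.le).pow 2
      refine h1.congr_deriv ?_
      ring
    have hb3 : ∀ s > (0:ℝ), K^2 ≤ (fun s => (Y s)^2) s →
        (fun s => 2*Y s*(lam*Y s + r s/C)) s ≤ 0 := by
      intro s hs hKY
      simp only at hKY ⊢
      have habs : K ≤ |Y s| := by
        have h1 := Real.sqrt_le_sqrt hKY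
        rwa [Real.sqrt_sq hK0, Real.sqrt_sq_eq_abs] at h1
      have hYr : Y s * r s ≤ |Y s| * Mr := by
        calc Y s * r s ≤ |Y s * r s| := le_abs_self _
        _ = |Y s| * |r s| := abs_mul _ _
        _ ≤ |Y s| * Mr := mul_le_mul_of_nonneg_left (hMr s hs.le) (abs_nonneg _)
      have hrhs : 2*lam*C*(Y s)^2 + 2*(Y s * r s) ≤ 0 := by
        have hMrle : Mr ≤ (-lam)*C*|Y s| := by
          have := mul_le_mul_of_nonneg_left habs (mul_pos hlp hC).le
          rw [show (-lam)*C*K = Mr from hKdef] at this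
          linarith [this]
        have h5 := mul_le_mul_of_nonneg_left hMrle (abs_nonneg (Y s))
        have h6 : |Y s| * ((-lam)*C*|Y s|) = (-lam)*C*(Y s)^2 := by
          rw [show |Y s| * ((-lam)*C*|Y s|) = (-lam)*C*(|Y s| * |Y s|) from by ring, ← sq_abs (Y s)]
          ring
        rw [h6] at h5
        linarith [hYr, h5]
      have heq2 : 2*Y s*(lam*Y s + r s/C) = (2*lam*C*(Y s)^2 + 2*(Y s * r s)) / C := by
        field_simp
      rw [heq2]
      exact div_nonpos_of_nonpos_of_nonneg hrhs hC.le
    exact barrier hb1 hb2 (K^2) hb3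
  obtain ⟨MY, hMY⟩ : ∃ x : ℝ, x = max |Y 0| K := ⟨_, rfl⟩
  have hMY0 : 0 ≤ MY := by rw [hMY]; exact le_trans (abs_nonneg _) (le_max_left _ _)
  have hYabs : ∀ t ≥ (0:ℝ), |Y t| ≤ MY := by
    intro t ht
    have h1 := hYbd t ht
    have h2 : (Y t)^2 ≤ MY^2 := by
      rcases max_cases ((Y 0)^2) (K^2) with ⟨hmc, _⟩ | ⟨hmc, _⟩
      · rw [hmc] at h1
        have : |Y 0| ≤ MY := by rw [hMY]; exact le_max_left _ _
        nlinarith [abs_nonneg (Y 0), sq_abs (Y 0)]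
      · rw [hmc] at h1
        have : K ≤ MY := by rw [hMY]; exact le_max_right _ _
        nlinarith
    have h3 := Real.sqrt_le_sqrt h2
    rwa [Real.sqrt_sq_eq_abs, Real.sqrt_sq hMY0] at h3
  -- bound on X
  have hXabs : ∀ t ≥ (0:ℝ), |X t| ≤ M + MY := by
    intro t ht
    have h1 : X t = e t + Y t := by rw [he t]; ring
    rw [h1]
    exact le_trans (abs_add_le _ _) (add_le_add (hMbnd t ht).2.2.2 (hYabs t ht))
  -- bound on u
  obtain ⟨Aα, hAα⟩ : ∃ x : ℝ, x = max |αmin| |αmax| := ⟨_, rfl⟩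
  obtain ⟨Aβ, hAβ⟩ : ∃ x : ℝ, x = max |βmin| |βmax| := ⟨_, rfl⟩
  obtain ⟨Aζ, hAζ⟩ : ∃ x : ℝ, x = max |ζmin| |ζmax| := ⟨_, rfl⟩
  have hαabs : ∀ t ≥ (0:ℝ), |αh t| ≤ Aα := fun t ht => by
    rw [hAα]; exact abs_le_max_abs_abs (hαmem t ht).1 (hαmem t ht).2
  have hβabs : ∀ t ≥ (0:ℝ), |βh t| ≤ Aβ := fun t ht => by
    rw [hAβ]; exact abs_le_max_abs_abs (hβmem t ht).1 (hβmem t ht).2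
  have hζabs : ∀ t ≥ (0:ℝ), |ζh t| ≤ Aζ := fun t ht => by
    rw [hAζ]; exact abs_le_max_abs_abs (hζmem t ht).1 (hζmem t ht).2
  have hAα0 : 0 ≤ Aα := le_trans (abs_nonneg _) (hαabs 0 le_rfl)
  have hAβ0 : 0 ≤ Aβ := le_trans (abs_nonneg _) (hβabs 0 le_rfl)
  have hMXnn : 0 ≤ M + MY := by linarith
  have hubnd : ∀ t ≥ (0:ℝ), |u t| ≤ Aα*(M+MY) + Aβ*Mr + Aζ := by
    intro t ht
    rw [hu t]
    have i1 : |αh t * X t| ≤ Aα*(M+MY) := by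
      rw [abs_mul]; exact mul_le_mul (hαabs t ht) (hXabs t ht) (abs_nonneg _) hAα0
    have i2 : |βh t * r t| ≤ Aβ*Mr := by
      rw [abs_mul]; exact mul_le_mul (hβabs t ht) (hMr t ht) (abs_nonneg _) hAβ0
    have i3 := abs_add_three (αh t * X t) (βh t * r t) (ζh t)
    have i4 := hζabs t ht
    linarith
  -- Part (iii): Barbálat argument
  have hecont : ContinuousOn (fun s => (e s)^2) (Set.Ici 0) :=
    fun s hs => (((heD s hs).continuousAt).pow 2).continuousWithinAt
  have hecontIoi : ContinuousOn (fun s => (e s)^2) (Set.Ioi 0) :=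
    hecont.mono Set.Ioi_subset_Ici_self
  have hInt : ∀ a2 b2 : ℝ, 0 ≤ a2 → 0 ≤ b2 →
      IntervalIntegrable (fun s => (e s)^2) MeasureTheory.volume a2 b2 := by
    intro a2 b2 ha hb2
    apply ContinuousOn.intervalIntegrable
    apply hecont.mono
    intro x hx
    rcases le_total a2 b2 with h | h
    · rw [Set.uIcc_of_le h] at hx; exact le_trans ha hx.1
    · rw [Set.uIcc_of_ge h] at hx; exact le_trans hb2 hx.1
  obtain ⟨F, hF⟩ : ∃ f : ℝ → ℝ, f = fun t => ∫ s in (0:ℝ)..t, (e s)^2 := ⟨_, rfl⟩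
  have hF0 : F 0 = 0 := by rw [hF]; simp
  have hFd : ∀ t > (0:ℝ), HasDerivAt F ((e t)^2) t := by
    intro t ht
    rw [hF]
    exact intervalIntegral.integral_hasDerivAt_right (hInt 0 t le_rfl ht.le)
      (ContinuousOn.stronglyMeasurableAtFilter isOpen_Ioi hecontIoi t ht)
      (((heD t ht.le).continuousAt).pow 2)
  have hFadd : ∀ s t : ℝ, 0 ≤ s → s ≤ t → F t = F s + ∫ x in s..t, (e x)^2 := by
    intro s t hs hst
    rw [hF]
    simp only
    exact (intervalIntegral.integral_add_adjacent_intervals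
      (hInt 0 s le_rfl hs) (hInt s t hs (le_trans hs hst))).symm
  have hFmono : ∀ s t : ℝ, 0 ≤ s → s ≤ t → F s ≤ F t := by
    intro s t hs hst
    rw [hFadd s t hs hst]
    have h1 : 0 ≤ ∫ x in s..t, (e x)^2 :=
      intervalIntegral.integral_nonneg hst (fun x _ => sq_nonneg _)
    linarith
  have hFcont : ContinuousOn F (Set.Ici 0) := by
    intro t ht
    have hle : (0:ℝ) ≤ t + 1 := by
      simp only [Set.mem_Ici] at ht; linarith
    have hio : MeasureTheory.IntegrableOn (fun s => (e s)^2) (Set.uIcc 0 (t+1))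
        MeasureTheory.volume := by
      rw [Set.uIcc_of_le hle]
      exact (hecont.mono (Set.Icc_subset_Ici_self)).integrableOn_Icc
    have h1 := intervalIntegral.continuousOn_primitive_interval hio
    rw [Set.uIcc_of_le hle] at h1
    have h2 : ContinuousWithinAt F (Set.Icc 0 (t+1)) t := by
      rw [hF]
      exact h1 t ⟨ht, by simp only [Set.mem_Ici] at ht; linarith⟩
    apply h2.mono_of_mem_nhdsWithin
    have h3 : Set.Ici (0:ℝ) ∩ Set.Iic (t+1) ∈ nhdsWithin t (Set.Ici 0) :=
      Filter.inter_mem self_mem_nhdsWithin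
        (mem_nhdsWithin_of_mem_nhds (Iic_mem_nhds (by simp only [Set.mem_Ici] at ht; linarith)))
    rwa [Set.Ici_inter_Iic] at h3
  -- integral of e² is bounded
  have hFbB : ∀ t ≥ (0:ℝ), F t ≤ V 0 / (-lam) := by
    have hg2cont : ContinuousOn (fun t => V t - lam * F t) (Set.Ici 0) :=
      hVcont.sub (continuousOn_const.mul hFcont)
    have hg2d : ∀ t > (0:ℝ), HasDerivAt (fun t => V t - lam * F t)
        ((fun t => Vd t - lam * (e t)^2) t) t := fun t ht =>
      (hVD t ht.le).sub ((hFd t ht).const_mul lam)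
    have hg2le := barrier hg2cont hg2d (V 0 - lam * F 0)
      (fun s hs _ => sub_nonpos.mpr (hVle s hs.le))
    intro t ht
    have h1 := hg2le t ht
    rw [max_self, hF0, mul_zero, sub_zero] at h1
    rw [le_div_iff₀ hlp]
    have h2 := hVnn t
    linarith
  -- derivative of e is bounded
  obtain ⟨L, hLdef⟩ : ∃ x : ℝ, x = |lam| * M + (-b)*(M*(M+MY) + M*Mr + M) + 1 := ⟨_, rfl⟩
  have hL1 : 0 < L := by
    rw [hLdef]
    have j1 : 0 ≤ |lam| * M := mul_nonneg (abs_nonneg _) hM0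
    have j2 : 0 ≤ M*(M+MY) := mul_nonneg hM0 hMXnn
    have j3 : 0 ≤ M*Mr := mul_nonneg hM0 hMr0
    nlinarith [mul_nonneg hbp.le (by linarith : (0:ℝ) ≤ M*(M+MY) + M*Mr + M)]
  have hedb : ∀ t ≥ (0:ℝ), |ed t| ≤ L := by
    intro t ht
    obtain ⟨m1, m2, m3, m4⟩ := hMbnd t ht
    have hx := hXabs t ht
    have hr := hMr t ht
    have i1 : |(αh t - αs) * X t| ≤ M * (M+MY) := by
      rw [abs_mul]; exact mul_le_mul m1 hx (abs_nonneg _) hM0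
    have i2 : |(βh t - βs) * r t| ≤ M * Mr := by
      rw [abs_mul]; exact mul_le_mul m2 hr (abs_nonneg _) hM0
    have i3 := abs_add_three ((αh t - αs) * X t) ((βh t - βs) * r t) (ζh t - ζs)
    have i4 : |(αh t - αs) * X t + (βh t - βs) * r t + (ζh t - ζs)|
        ≤ M*(M+MY) + M*Mr + M := by linarith
    have i5 := abs_add_le (lam * e t)
      (b * ((αh t - αs) * X t + (βh t - βs) * r t + (ζh t - ζs)))
    rw [abs_mul, abs_mul, abs_of_neg hb] at i5
    have i6 : |lam| * |e t| ≤ |lam| * M := mul_le_mul_of_nonneg_left m4 (abs_nonneg lam)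
    have i7 : (-b) * |(αh t - αs) * X t + (βh t - βs) * r t + (ζh t - ζs)|
        ≤ (-b)*(M*(M+MY)+M*Mr+M) := mul_le_mul_of_nonneg_left i4 hbp.le
    rw [hed, hLdef]
    simp only
    linarith
  -- the limit
  refine ⟨⟨M, fun t ht => by
      obtain ⟨m1, m2, m3, m4⟩ := hMbnd t ht
      rw [← hαs, ← hβs, ← hζs]
      exact ⟨m1, m2, m3, m4⟩⟩,
    ⟨fun t ht => ⟨hαmem t ht, hβmem t ht, hζmem t ht⟩,
      ⟨Aα*(M+MY) + Aβ*Mr + Aζ, hubnd⟩⟩, ?_⟩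
  rw [Metric.tendsto_atTop]
  intro ε hε
  obtain ⟨δ, hδdef⟩ : ∃ x : ℝ, x = ε/(2*L) := ⟨_, rfl⟩
  have hδ : 0 < δ := by rw [hδdef]; positivity
  obtain ⟨η, hηdef⟩ : ∃ x : ℝ, x = (ε/2)^2*δ := ⟨_, rfl⟩
  have hη : 0 < η := by rw [hηdef]; positivity
  have hSne : (F '' (Set.Ici 0)).Nonempty := ⟨F 0, 0, Set.mem_Ici.mpr le_rfl, rfl⟩
  have hSbdd : BddAbove (F '' Set.Ici 0) :=
    ⟨V 0/(-lam), fun y hy => by obtain ⟨t, ht, rfl⟩ := hy; exact hFbB t ht⟩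
  obtain ⟨y, hyS, hyl⟩ := exists_lt_of_lt_csSup hSne
    (show sSup (F '' Set.Ici 0) - η/2 < sSup (F '' Set.Ici 0) from by linarith)
  obtain ⟨T, hT0, rfl⟩ := hyS
  refine ⟨T, fun t ht => ?_⟩
  rw [Real.dist_eq, sub_zero]
  by_contra hcon
  push_neg at hcon
  have ht0 : (0:ℝ) ≤ t := le_trans hT0 ht
  have hlow : ∀ s ∈ Set.Icc t (t+δ), ε/2 ≤ |e s| := by
    intro s hs
    have hmv : ‖e s - e t‖ ≤ L * ‖s - t‖ :=
      Convex.norm_image_sub_le_of_norm_hasDerivWithin_le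
        (fun x hx => (heD x (le_trans ht0 hx.1)).hasDerivWithinAt)
        (fun x hx => by rw [Real.norm_eq_abs]; exact hedb x (le_trans ht0 hx.1))
        (convex_Icc _ _) (Set.left_mem_Icc.mpr (by linarith)) hs
    rw [Real.norm_eq_abs, Real.norm_eq_abs,
      abs_of_nonneg (by linarith [hs.1] : (0:ℝ) ≤ s - t)] at hmv
    have h3 : L*(s-t) ≤ L*δ := mul_le_mul_of_nonneg_left (by linarith [hs.2]) hL1.le
    have h4 : L*δ = ε/2 := by rw [hδdef]; field_simp
    have h5 : |e t| - |e s| ≤ |e s - e t| := by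
      rw [abs_sub_comm]; exact abs_sub_abs_le_abs_sub _ _
    linarith
  have hib : (ε/2)^2 * δ ≤ F (t+δ) - F t := by
    have hadd := hFadd t (t+δ) ht0 (by linarith)
    have hmono2 := intervalIntegral.integral_mono_on (by linarith : t ≤ t+δ)
      (intervalIntegrable_const (c := (ε/2)^2)) (hInt t (t+δ) ht0 (by linarith))
      (fun x hx => by
        have h6 := hlow x hx
        have h7 := pow_le_pow_left₀ (by positivity : (0:ℝ) ≤ ε/2) h6 2
        rwa [sq_abs] at h7)
    rw [intervalIntegral.integral_const, smul_eq_mul,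
      (by ring : t + δ - t = δ)] at hmono2
    rw [hadd]
    linarith
  have h7 : F (t+δ) ≤ sSup (F '' Set.Ici 0) :=
    le_csSup hSbdd ⟨t+δ, Set.mem_Ici.mpr (by linarith), rfl⟩
  have h8 : F T ≤ F t := hFmono T t hT0 ht
  rw [← hηdef] at hib
  linarith
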